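/- Let G be an infinite, connected, locally finite simple graph on a vertex set V, and let z : V → ℕ be a sandpile configuration with finite support. If L₁ and L₂ are two legal toppling sequences from z whose final configurations are stable, then those final configurations coincide: the final stable configuration depends solely on the initial configuration, independently of the order in which the topplings are performed. -/

import Mathlib

variable {V : Type*}

def topple (G : SimpleGraph V) [G.LocallyFinite] [DecidableEq V] [DecidableRel G.Adj]
    (z : V → ℕ) (i : V) : V → ℕ :=
  fun j => if j = i then z i - G.degree i else if G.Adj i j then z j + 1 else z j

def LegalSeq (G : SimpleGraph V) [G.LocallyFinite] [DecidableEq V] [DecidableRel G.Adj] :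
    (V → ℕ) → List V → Prop
  | _, [] => True
  | z, i :: L => G.degree i ≤ z i ∧ LegalSeq G (topple G z i) L

section Aux

variable (G : SimpleGraph V) [G.LocallyFinite] [DecidableEq V] [DecidableRel G.Adj]

lemma le_topple (z : V → ℕ) {i j : V} (h : j ≠ i) : z j ≤ topple G z i j := by
  simp only [topple, if_neg h]
  split <;> omega

lemma le_foldl {i : V} : ∀ (L : List V) (z : V → ℕ), i ∉ L → z i ≤ (L.foldl (topple G) z) i
  | [], z, _ => le_refl _
  | j :: L, z, h => by
      simp only [List.mem_cons, not_or] at h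
      exact le_trans (le_topple G z h.1) (le_foldl L _ h.2)

lemma foldl_count : ∀ (L : List V) (z : V → ℕ), LegalSeq G z L → ∀ v,
    (L.foldl (topple G) z) v + G.degree v * L.count v
      = z v + L.countP (fun i => decide (G.Adj i v))
  | [], z, _, v => by simp
  | i :: L, z, h, v => by
      obtain ⟨hi, hL⟩ := h
      have IH := foldl_count L (topple G z i) hL v
      simp only [List.foldl_cons]
      by_cases hvi : v = i
      · subst hvi
        have ht : topple G z v v = z v - G.degree v := by simp [topple]
        rw [ht] at IH
        have hc : (v :: L).count v = L.count v + 1 := List.count_cons_self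
        have hp : (v :: L).countP (fun i => decide (G.Adj i v))
            = L.countP (fun i => decide (G.Adj i v)) := by
          simp [List.countP_cons, SimpleGraph.irrefl]
        rw [hc, hp, Nat.mul_add, Nat.mul_one]
        omega
      · have ht : topple G z i v = if G.Adj i v then z v + 1 else z v := by
          simp [topple, hvi]
        rw [ht] at IH
        have hc : (i :: L).count v = L.count v := List.count_cons_of_ne (Ne.symm hvi)
        rw [hc]
        by_cases hadj : G.Adj i v
        · have hp : (i :: L).countP (fun i => decide (G.Adj i v))
              = L.countP (fun i => decide (G.Adj i v)) + 1 := by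
            simp [List.countP_cons, hadj]
          rw [hp]
          simp only [hadj, if_true] at IH
          omega
        · have hp : (i :: L).countP (fun i => decide (G.Adj i v))
              = L.countP (fun i => decide (G.Adj i v)) := by
            simp [List.countP_cons, hadj]
          rw [hp]
          simp only [hadj, if_false] at IH
          omega

lemma foldl_eq_of_count (L₁ L₂ : List V) (z : V → ℕ) (h₁ : LegalSeq G z L₁)
    (h₂ : LegalSeq G z L₂) (hc : ∀ v, L₁.count v = L₂.count v) :
    L₁.foldl (topple G) z = L₂.foldl (topple G) z := by
  have hperm : L₁.Perm L₂ := List.perm_iff_count.2 hc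
  funext v
  have e₁ := foldl_count G L₁ z h₁ v
  have e₂ := foldl_count G L₂ z h₂ v
  rw [hc v, hperm.countP_eq] at e₁
  omega

lemma topple_comm (z : V → ℕ) {i j : V} (hij : i ≠ j) (hi : G.degree i ≤ z i)
    (hj : G.degree j ≤ z j) : topple G (topple G z i) j = topple G (topple G z j) i := by
  funext v
  by_cases hvj : v = j
  · subst hvj
    by_cases hadj : G.Adj i v <;> simp [topple, hij, Ne.symm hij, hadj] <;> omega
  · by_cases hvi : v = i
    · subst hvi
      by_cases hadj : G.Adj j v <;> simp [topple, hij, Ne.symm hij, hadj] <;> omega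
    · simp only [topple, if_neg hvj, if_neg hvi]
      by_cases h1 : G.Adj i v <;> by_cases h2 : G.Adj j v <;> simp [h1, h2, hvi, hvj]

lemma legal_moveToFront : ∀ (L : List V) (z : V → ℕ) (i : V), LegalSeq G z L → i ∈ L →
    G.degree i ≤ z i → LegalSeq G z (i :: L.erase i)
  | [], _, _, _, hmem, _ => absurd hmem List.not_mem_nil
  | j :: L, z, i, ⟨hj, hL⟩, hmem, hi => by
      by_cases hji : j = i
      · subst hji
        rw [List.erase_cons_head]
        exact ⟨hi, hL⟩
      · rw [List.erase_cons_tail (by simpa using hji)]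
        have hmem' : i ∈ L := by
          rcases List.mem_cons.1 hmem with h | h
          · exact absurd h.symm hji
          · exact h
        have hi' : G.degree i ≤ topple G z j i := le_trans hi (le_topple G z (Ne.symm hji))
        obtain ⟨hi'', htail⟩ := legal_moveToFront L (topple G z j) i hL hmem' hi'
        refine ⟨hi, le_trans hj (le_topple G z hji), ?_⟩
        rwa [topple_comm G z (fun e => hji e.symm) hi hj]

lemma count_le : ∀ (L₁ : List V) (z : V → ℕ) (L₂ : List V),
    LegalSeq G z L₁ → LegalSeq G z L₂ →
    (∀ v, (L₂.foldl (topple G) z) v < G.degree v) →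
    ∀ v, L₁.count v ≤ L₂.count v
  | [], _, _, _, _, _, _ => Nat.zero_le _
  | i :: L₁, z, L₂, ⟨hi, h₁⟩, h₂, hs, v => by
      have hmem : i ∈ L₂ := by
        by_contra hnot
        exact absurd (lt_of_le_of_lt (le_trans hi (le_foldl G L₂ z hnot)) (hs i)) (lt_irrefl _)
      have hmv := legal_moveToFront G L₂ z i h₂ hmem hi
      have hcnt : ∀ w, (i :: L₂.erase i).count w = L₂.count w := by
        intro w
        by_cases hwi : w = i
        · subst hwi
          have h1 : 1 ≤ L₂.count w := List.count_pos_iff.2 hmem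
          rw [List.count_cons_self, List.count_erase_self]
          omega
        · rw [List.count_cons_of_ne (Ne.symm hwi), List.count_erase_of_ne hwi]
      have hfold := foldl_eq_of_count G (i :: L₂.erase i) L₂ z hmv h₂ hcnt
      have hs' : ∀ w, ((L₂.erase i).foldl (topple G) (topple G z i)) w < G.degree w := by
        intro w
        have : (i :: L₂.erase i).foldl (topple G) z w < G.degree w := by
          rw [hfold]; exact hs w
        simpa using this
      have IH := count_le L₁ (topple G z i) (L₂.erase i) h₁ hmv.2 hs' v
      have := hcnt v
      rw [List.count_cons] at this ⊢
      omega

end Aux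

/-- Abelian property on infinite graphs: on an infinite, connected, locally
finite simple graph, if two legal toppling sequences from a finitely supported
configuration `z` both end in a stable configuration, then the two final stable
configurations coincide. -/
theorem abelian_infinite [Infinite V] [DecidableEq V]
    (G : SimpleGraph V) [G.LocallyFinite] [DecidableRel G.Adj]
    (hconn : G.Connected) (z : V → ℕ) (hz : (Function.support z).Finite)
    (L₁ L₂ : List V) (h₁ : LegalSeq G z L₁) (h₂ : LegalSeq G z L₂)
    (hs₁ : ∀ v, L₁.foldl (topple G) z v < G.degree v)
    (hs₂ : ∀ v, L₂.foldl (topple G) z v < G.degree v) :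
    L₁.foldl (topple G) z = L₂.foldl (topple G) z := by
  refine foldl_eq_of_count G L₁ L₂ z h₁ h₂ fun v => le_antisymm ?_ ?_
  · exact count_le G L₁ z L₂ h₁ h₂ hs₂ v
  · exact count_le G L₂ z L₁ h₂ h₁ hs₁ v
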